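/- For any safety constraint S ⊆ N^ℕ there exists a detector a_S and a state x such that Constr(a_S, x) = S; specifically, take the carrier to be {ε} ∪ {u ∈ N⁺ | u = s[0..|u|) for some s ∈ S}, the structure map a_S(u)(n) = ⇓ if un is not in the carrier and un otherwise, and x = ε. -/

import Mathlib

open scoped Classical

/-- The extension of a detector to words, propagating `⇓`. -/
def aplus {A N : Type*} (a : A → N → Option A) : A → List N → Option A
  | x, [] => some x
  | x, n :: u => (a x n).bind fun y => aplus a y u

/-- A safety constraint: `S` contains any stream all of whose finite prefixes are
prefixes of elements of `S`. -/
def IsSafety {N : Type*} (S : Set (ℕ → N)) : Prop :=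
  ∀ s : ℕ → N, (∀ m : ℕ, ∃ s' ∈ S, ∀ k < m, s' k = s k) → s ∈ S

/-- The carrier of the detector `a_S`: `{ε} ∪ {u ∈ N⁺ | u = s[0..|u|) for some s ∈ S}`. -/
def carS {N : Type*} (S : Set (ℕ → N)) : Set (List N) :=
  {u | u = [] ∨ ∃ s ∈ S, u = (List.range u.length).map s}

/-- The detector `a_S`: `a_S(u)(n) = un` if `un` lies in the carrier, else `⇓`. -/
noncomputable def detS {N : Type*} (S : Set (ℕ → N))
    (u : {u : List N // u ∈ carS S}) (n : N) : Option {u : List N // u ∈ carS S} :=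
  if h : u.1 ++ [n] ∈ carS S then some ⟨u.1 ++ [n], h⟩ else none

lemma carS_prefix {N : Type*} {S : Set (ℕ → N)} {u w : List N}
    (hw : w ∈ carS S) (h : u <+: w) : u ∈ carS S := by
  rcases hw with rfl | ⟨s, hs, hws⟩
  · left; exact List.prefix_nil.mp h
  · obtain ⟨t, rfl⟩ := h
    right
    refine ⟨s, hs, ?_⟩
    have h2 := congrArg (List.take u.length) hws
    rw [List.take_left] at h2
    rw [h2, ← List.map_take, List.take_range]
    have hmin : min u.length (u ++ t).length = u.length := by simp
    rw [hmin]
    simp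

lemma aplus_ne_none_of_mem {N : Type*} {S : Set (ℕ → N)} :
    ∀ (v u : List N) (hu : u ∈ carS S), u ++ v ∈ carS S →
      aplus (detS S) ⟨u, hu⟩ v ≠ none := by
  intro v
  induction v with
  | nil => intro u hu _; simp [aplus]
  | cons n v' ih =>
    intro u hu huv
    have h1 : u ++ [n] ∈ carS S :=
      carS_prefix huv ⟨v', by simp⟩
    have h2 : (u ++ [n]) ++ v' ∈ carS S := by simpa using huv
    simpa [aplus, detS, h1] using ih (u ++ [n]) h1 h2

lemma mem_of_aplus_ne_none {N : Type*} {S : Set (ℕ → N)} :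
    ∀ (v u : List N) (hu : u ∈ carS S),
      aplus (detS S) ⟨u, hu⟩ v ≠ none → u ++ v ∈ carS S := by
  intro v
  induction v with
  | nil => intro u hu _; simpa using hu
  | cons n v' ih =>
    intro u hu h
    by_cases h1 : u ++ [n] ∈ carS S
    · have := ih (u ++ [n]) h1 (by simpa [aplus, detS, h1] using h)
      simpa using this
    · exfalso; apply h; simp [aplus, detS, h1]

/-- For any safety constraint `S`, the detector `a_S` with initial state `ε`
recognises exactly `S`: `Constr(a_S, ε) = S`. -/
theorem safety_has_detector (N : Type) [Fintype N] (S : Set (ℕ → N))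
    (hS : IsSafety S) :
    {s : ℕ → N | ∀ m : ℕ, 0 < m →
        aplus (detS S) ⟨[], Or.inl rfl⟩ ((List.range m).map s) ≠ none} = S := by
  ext s
  simp only [Set.mem_setOf_eq]
  constructor
  · intro h
    have hcar : ∀ m : ℕ, 0 < m → (List.range m).map s ∈ carS S := by
      intro m hm
      have := mem_of_aplus_ne_none ((List.range m).map s) [] (Or.inl rfl) (h m hm)
      simpa using this
    have key : ∀ m : ℕ, 0 < m → ∃ s' ∈ S, ∀ k < m, s' k = s k := by
      intro m hm
      rcases hcar m hm with heq | ⟨s', hs', heq⟩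
      · simp at heq; omega
      · refine ⟨s', hs', fun k hk => ?_⟩
        have hlen : ((List.range m).map s).length = m := by simp
        rw [hlen] at heq
        have := congrArg (fun l => l[k]?) heq
        simpa [List.getElem?_map, List.getElem?_range, hk] using this.symm
    apply hS
    intro m
    rcases Nat.eq_zero_or_pos m with rfl | hm
    · obtain ⟨s', hs', _⟩ := key 1 one_pos
      exact ⟨s', hs', by omega⟩
    · exact key m hm
  · intro hs m hm
    have hmem : ([] : List N) ++ (List.range m).map s ∈ carS S := by
      right
      exact ⟨s, hs, by simp⟩
    exact aplus_ne_none_of_mem _ [] (Or.inl rfl) hmem
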